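/- Let λ₁ > 0, λ₂ > 0, α > 0 and θ ∈ [-1, 1], let D = λ₂α/(λ₁+λ₂α) + θλ₁·(2/(2λ₁+λ₂α) + 1/(λ₁+2λ₂α) - 2/(λ₁+λ₂α)), K = λ₁/D, and set p₁ = K/λ₁, p₂ = -K(1+θ)/(λ₁+λ₂α), p₃ = 2Kθ/(2λ₁+λ₂α), p₄ = Kθ/(λ₁+2λ₂α), p₅ = -Kθ/(λ₁+λ₂α). Then for every natural number n ≥ 1, ∫₀^∞ xⁿ · K e^{-λ₁x}(1 - e^{-λ₂αx})(1 - θe^{-λ₂αx}(1 - 2e^{-λ₁x})) dx = n!·[p₁/λ₁ⁿ + p₂/(λ₁+λ₂α)ⁿ + p₃/(2λ₁+λ₂α)ⁿ + p₄/(λ₁+2λ₂α)ⁿ + p₅/(2ⁿ(λ₁+λ₂α)ⁿ)]. -/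

import Mathlib

open MeasureTheory Real

lemma gwed_integrable (n : ℕ) {b : ℝ} (hb : 0 < b) :
    IntegrableOn (fun x : ℝ => x ^ n * Real.exp (-b * x)) (Set.Ioi 0) := by
  have := integrableOn_rpow_mul_exp_neg_mul_rpow (s := (n : ℝ)) (p := 1)
    (by linarith [Nat.cast_nonneg (α := ℝ) n]) zero_lt_one hb
  simpa [Real.rpow_natCast, Real.rpow_one] using this

lemma gwed_integral (n : ℕ) {b : ℝ} (hb : 0 < b) :
    ∫ x in Set.Ioi (0:ℝ), x ^ n * Real.exp (-b * x)
      = (Nat.factorial n : ℝ) / b ^ (n + 1) := by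
  have h := integral_rpow_mul_exp_neg_mul_Ioi (a := (n:ℝ)+1) (r := b)
    (by positivity) hb
  have heq : ∀ x ∈ Set.Ioi (0:ℝ),
      x ^ ((n:ℝ)+1-1) * Real.exp (-(b * x)) = x ^ n * Real.exp (-b * x) := by
    intro x hx
    rw [add_sub_cancel_right, Real.rpow_natCast]
    ring_nf
  rw [setIntegral_congr_fun measurableSet_Ioi heq] at h
  rw [h]
  rw [show (n:ℝ)+1 = ((n+1 : ℕ) : ℝ) by push_cast; ring, Real.rpow_natCast,
    Nat.cast_add, Nat.cast_one, Real.Gamma_nat_eq_factorial]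
  simp [Nat.factorial_succ]
  ring

theorem gwed_nth_moment
    (l₁ l₂ α θ : ℝ) (hl₁ : 0 < l₁) (hl₂ : 0 < l₂) (hα : 0 < α)
    (hθ : θ ∈ Set.Icc (-1 : ℝ) 1)
    (D K p₁ p₂ p₃ p₄ p₅ : ℝ)
    (hD : D = l₂ * α / (l₁ + l₂ * α)
        + θ * l₁ * (2 / (2 * l₁ + l₂ * α) + 1 / (l₁ + 2 * l₂ * α)
          - 2 / (l₁ + l₂ * α)))
    (hK : K = l₁ / D)
    (hp₁ : p₁ = K / l₁)
    (hp₂ : p₂ = -(K * (1 + θ)) / (l₁ + l₂ * α))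
    (hp₃ : p₃ = 2 * K * θ / (2 * l₁ + l₂ * α))
    (hp₄ : p₄ = K * θ / (l₁ + 2 * l₂ * α))
    (hp₅ : p₅ = -(K * θ) / (l₁ + l₂ * α)) :
    ∀ n : ℕ, 1 ≤ n →
      (∫ x in Set.Ioi (0 : ℝ),
          x ^ n * (K * Real.exp (-l₁ * x) * (1 - Real.exp (-l₂ * α * x))
            * (1 - θ * Real.exp (-l₂ * α * x) * (1 - 2 * Real.exp (-l₁ * x)))))
        = (Nat.factorial n : ℝ)
            * (p₁ / l₁ ^ n + p₂ / (l₁ + l₂ * α) ^ n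
              + p₃ / (2 * l₁ + l₂ * α) ^ n + p₄ / (l₁ + 2 * l₂ * α) ^ n
              + p₅ / (2 ^ n * (l₁ + l₂ * α) ^ n)) := by
  intro n hn
  have ha0 : 0 < l₂ * α := by positivity
  have hb₁ : 0 < l₁ := hl₁
  have hb₂ : 0 < l₁ + l₂ * α := by linarith
  have hb₃ : 0 < 2 * l₁ + l₂ * α := by linarith
  have hb₄ : 0 < l₁ + 2 * l₂ * α := by linarith
  have hb₅ : 0 < 2 * l₁ + 2 * l₂ * α := by linarith
  -- pointwise decomposition
  have hpt : ∀ x : ℝ,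
      x ^ n * (K * Real.exp (-l₁ * x) * (1 - Real.exp (-l₂ * α * x))
        * (1 - θ * Real.exp (-l₂ * α * x) * (1 - 2 * Real.exp (-l₁ * x))))
      = K * (x ^ n * Real.exp (-l₁ * x))
        + (-(K * (1 + θ))) * (x ^ n * Real.exp (-(l₁ + l₂ * α) * x))
        + (2 * K * θ) * (x ^ n * Real.exp (-(2 * l₁ + l₂ * α) * x))
        + (K * θ) * (x ^ n * Real.exp (-(l₁ + 2 * l₂ * α) * x))
        + (-(2 * K * θ)) * (x ^ n * Real.exp (-(2 * l₁ + 2 * l₂ * α) * x)) := by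
    intro x
    have e₂ : Real.exp (-(l₁ + l₂ * α) * x) = Real.exp (-l₁ * x) * Real.exp (-l₂ * α * x) := by
      rw [← Real.exp_add]; ring_nf
    have e₃ : Real.exp (-(2 * l₁ + l₂ * α) * x)
        = Real.exp (-l₁ * x) * Real.exp (-l₁ * x) * Real.exp (-l₂ * α * x) := by
      rw [← Real.exp_add, ← Real.exp_add]; ring_nf
    have e₄ : Real.exp (-(l₁ + 2 * l₂ * α) * x)
        = Real.exp (-l₁ * x) * Real.exp (-l₂ * α * x) * Real.exp (-l₂ * α * x) := by
      rw [← Real.exp_add, ← Real.exp_add]; ring_nf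
    have e₅ : Real.exp (-(2 * l₁ + 2 * l₂ * α) * x)
        = Real.exp (-l₁ * x) * Real.exp (-l₁ * x) * Real.exp (-l₂ * α * x)
          * Real.exp (-l₂ * α * x) := by
      rw [← Real.exp_add, ← Real.exp_add, ← Real.exp_add]; ring_nf
    rw [e₂, e₃, e₄, e₅]; ring
  have i₁ := (gwed_integrable n hb₁).const_mul K
  have i₂ := (gwed_integrable n hb₂).const_mul (-(K * (1 + θ)))
  have i₃ := (gwed_integrable n hb₃).const_mul (2 * K * θ)
  have i₄ := (gwed_integrable n hb₄).const_mul (K * θ)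
  have i₅ := (gwed_integrable n hb₅).const_mul (-(2 * K * θ))
  calc
    (∫ x in Set.Ioi (0 : ℝ),
        x ^ n * (K * Real.exp (-l₁ * x) * (1 - Real.exp (-l₂ * α * x))
          * (1 - θ * Real.exp (-l₂ * α * x) * (1 - 2 * Real.exp (-l₁ * x)))))
      = ∫ x in Set.Ioi (0 : ℝ),
          (K * (x ^ n * Real.exp (-l₁ * x))
        + (-(K * (1 + θ))) * (x ^ n * Real.exp (-(l₁ + l₂ * α) * x))
        + (2 * K * θ) * (x ^ n * Real.exp (-(2 * l₁ + l₂ * α) * x))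
        + (K * θ) * (x ^ n * Real.exp (-(l₁ + 2 * l₂ * α) * x))
        + (-(2 * K * θ)) * (x ^ n * Real.exp (-(2 * l₁ + 2 * l₂ * α) * x))) := by
        exact integral_congr_ae (Filter.Eventually.of_forall fun x => hpt x)
    _ = K * ((Nat.factorial n : ℝ) / l₁ ^ (n + 1))
        + (-(K * (1 + θ))) * ((Nat.factorial n : ℝ) / (l₁ + l₂ * α) ^ (n + 1))
        + (2 * K * θ) * ((Nat.factorial n : ℝ) / (2 * l₁ + l₂ * α) ^ (n + 1))
        + (K * θ) * ((Nat.factorial n : ℝ) / (l₁ + 2 * l₂ * α) ^ (n + 1))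
        + (-(2 * K * θ)) * ((Nat.factorial n : ℝ) / (2 * l₁ + 2 * l₂ * α) ^ (n + 1)) := by
        rw [integral_add (by exact ((((i₁.add i₂).add i₃).add i₄)) ) i₅,
            integral_add (by exact (((i₁.add i₂).add i₃))) i₄,
            integral_add (by exact ((i₁.add i₂))) i₃,
            integral_add i₁ i₂,
            integral_const_mul, integral_const_mul, integral_const_mul,
            integral_const_mul, integral_const_mul,
            gwed_integral n hb₁, gwed_integral n hb₂, gwed_integral n hb₃,
            gwed_integral n hb₄, gwed_integral n hb₅]
    _ = (Nat.factorial n : ℝ)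
            * (p₁ / l₁ ^ n + p₂ / (l₁ + l₂ * α) ^ n
              + p₃ / (2 * l₁ + l₂ * α) ^ n + p₄ / (l₁ + 2 * l₂ * α) ^ n
              + p₅ / (2 ^ n * (l₁ + l₂ * α) ^ n)) := by
        rw [hp₁, hp₂, hp₃, hp₄, hp₅]
        have h2 : (2 * l₁ + 2 * l₂ * α) = 2 * (l₁ + l₂ * α) := by ring
        rw [h2, mul_pow]
        have hpow : ∀ b : ℝ, 0 < b → b ^ (n+1) = b ^ n * b := fun b _ => pow_succ b n
        field_simp
        ring
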